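/- Let (X,d) be a C-quasi-convex metric space (every pair of points x,y is joined by a rectifiable curve of length at most C·d(x,y)), (Y,d') a metric space, and f : X → Y with pointwise Lipschitz constant lip(f)(x) ≤ L at every point. Then f is CL-Lipschitz. -/

import Mathlib

open Filter Topology

/-- The pointwise Lipschitz constant of `f` at `x`. -/
noncomputable def elip {X Y : Type*} [MetricSpace X] [MetricSpace Y]
    (f : X → Y) (x : X) : ENNReal :=
  limsup (fun y => edist (f y) (f x) / edist y x) (𝓝[≠] x)

lemma elip_loc {X Y : Type*} [MetricSpace X] [MetricSpace Y]
    (f : X → Y) (x : X) {M : ENNReal} (h : elip f x < M) :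
    ∀ᶠ y in 𝓝 x, edist (f y) (f x) ≤ M * edist y x := by
  have h1 : ∀ᶠ y in 𝓝[≠] x, edist (f y) (f x) / edist y x < M :=
    Filter.eventually_lt_of_limsup_lt h
  rw [eventually_nhdsWithin_iff] at h1
  filter_upwards [h1] with y hy
  by_cases hxy : y = x
  · simp [hxy]
  · have hne : edist y x ≠ 0 := fun h => hxy (edist_eq_zero.mp h)
    have hlt := hy hxy
    rw [ENNReal.div_lt_iff (Or.inl hne) (Or.inl (edist_ne_top y x))] at hlt
    exact hlt.le

lemma icc_var {X : Type*} [MetricSpace X] (γ : ℝ → X) {a b c : ℝ}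
    (hab : a ≤ b) (hbc : b ≤ c) :
    eVariationOn γ (Set.Icc a b) + eVariationOn γ (Set.Icc b c)
      = eVariationOn γ (Set.Icc a c) := by
  have := eVariationOn.Icc_add_Icc γ (s := Set.univ) hab hbc trivial
  simpa [Set.univ_inter] using this

lemma core_lemma {X Y : Type*} [MetricSpace X] [MetricSpace Y]
    (f : X → Y) {M : ENNReal} (hf : ∀ z, elip f z < M)
    (γ : ℝ → X) (hγ : ContinuousOn γ (Set.Icc 0 1)) :
    edist (f (γ 1)) (f (γ 0)) ≤ M * eVariationOn γ (Set.Icc 0 1) := by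
  set A := {t | t ∈ Set.Icc (0:ℝ) 1 ∧
    edist (f (γ t)) (f (γ 0)) ≤ M * eVariationOn γ (Set.Icc 0 t)} with hA
  have h0A : (0:ℝ) ∈ A := ⟨⟨le_refl 0, zero_le_one⟩, by simp⟩
  have hbdd : BddAbove A := ⟨1, fun t ht => ht.1.2⟩
  set s := sSup A with hsdef
  have hs0 : 0 ≤ s := le_csSup hbdd h0A
  have hs1 : s ≤ 1 := csSup_le ⟨0, h0A⟩ fun t ht => ht.1.2
  have hsIcc : s ∈ Set.Icc (0:ℝ) 1 := ⟨hs0, hs1⟩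
  have hloc : ∀ᶠ t in 𝓝[Set.Icc (0:ℝ) 1] s,
      edist (f (γ t)) (f (γ s)) ≤ M * edist (γ t) (γ s) :=
    (hγ s hsIcc).eventually (elip_loc f (γ s) (hf _))
  have hsA : s ∈ A := by
    have hclos : s ∈ closure A := csSup_mem_closure ⟨0, h0A⟩ hbdd
    have hnb : (𝓝[A] s).NeBot := mem_closure_iff_nhdsWithin_neBot.mp hclos
    have hAsub : A ⊆ Set.Icc 0 1 := fun t ht => ht.1
    have hloc' : ∀ᶠ t in 𝓝[A] s,
        edist (f (γ t)) (f (γ s)) ≤ M * edist (γ t) (γ s) :=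
      hloc.filter_mono (nhdsWithin_mono s hAsub)
    obtain ⟨t, htloc, htA⟩ := (hloc'.and eventually_mem_nhdsWithin).exists
    have hts : t ≤ s := le_csSup hbdd htA
    have h1 : edist (γ t) (γ s) ≤ eVariationOn γ (Set.Icc t s) :=
      eVariationOn.edist_le γ ⟨le_rfl, hts⟩ ⟨hts, le_rfl⟩
    refine ⟨hsIcc, ?_⟩
    calc edist (f (γ s)) (f (γ 0))
        ≤ edist (f (γ s)) (f (γ t)) + edist (f (γ t)) (f (γ 0)) :=
          edist_triangle _ _ _
      _ ≤ M * eVariationOn γ (Set.Icc t s) + M * eVariationOn γ (Set.Icc 0 t) := by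
          refine add_le_add ?_ htA.2
          rw [edist_comm]
          exact htloc.trans (mul_le_mul_right h1 M)
      _ = M * eVariationOn γ (Set.Icc 0 s) := by
          rw [add_comm, ← mul_add, icc_var γ htA.1.1 hts]
  have hs1' : s = 1 := by
    by_contra h
    have hslt : s < 1 := lt_of_le_of_ne hs1 h
    have hsub : Set.Ioc s 1 ⊆ Set.Icc 0 1 := fun t ht => ⟨hs0.trans ht.1.le, ht.2⟩
    have hclos : s ∈ closure (Set.Ioc s 1) := by
      rw [closure_Ioc hslt.ne]; exact ⟨le_rfl, hs1⟩
    have hnb : (𝓝[Set.Ioc s 1] s).NeBot := mem_closure_iff_nhdsWithin_neBot.mp hclos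
    have hloc' : ∀ᶠ t in 𝓝[Set.Ioc s 1] s,
        edist (f (γ t)) (f (γ s)) ≤ M * edist (γ t) (γ s) :=
      hloc.filter_mono (nhdsWithin_mono s hsub)
    obtain ⟨t, htloc, htI⟩ := (hloc'.and eventually_mem_nhdsWithin).exists
    have htA : t ∈ A := by
      refine ⟨hsub htI, ?_⟩
      have h1 : edist (γ t) (γ s) ≤ eVariationOn γ (Set.Icc s t) :=
        eVariationOn.edist_le γ ⟨htI.1.le, le_rfl⟩ ⟨le_rfl, htI.1.le⟩
      calc edist (f (γ t)) (f (γ 0))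
          ≤ edist (f (γ t)) (f (γ s)) + edist (f (γ s)) (f (γ 0)) :=
            edist_triangle _ _ _
        _ ≤ M * eVariationOn γ (Set.Icc s t) + M * eVariationOn γ (Set.Icc 0 s) :=
            add_le_add (htloc.trans (mul_le_mul_right h1 M)) hsA.2
        _ = M * eVariationOn γ (Set.Icc 0 t) := by
            rw [add_comm, ← mul_add, icc_var γ hs0 htI.1.le]
    exact absurd (le_csSup hbdd htA) (not_le.mpr htI.1)
  rw [hs1'] at hsA
  exact hsA.2

/-- In a `C`-quasi-convex metric space, a function with pointwise Lipschitz
constant bounded by `L` everywhere is `C * L`-Lipschitz. -/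
theorem stmt1 {X Y : Type*} [MetricSpace X] [MetricSpace Y]
    (C L : NNReal) (hC : 0 < C)
    (hqc : ∀ x y : X, ∃ γ : ℝ → X, ContinuousOn γ (Set.Icc 0 1) ∧
      γ 0 = x ∧ γ 1 = y ∧
      eVariationOn γ (Set.Icc 0 1) ≤ ENNReal.ofReal (C * dist x y))
    (f : X → Y) (hf : ∀ x : X, elip f x ≤ L) :
    LipschitzWith (C * L) f := by
  intro x y
  obtain ⟨γ, hcont, h0, h1, hvar⟩ := hqc x y
  set K := ENNReal.ofReal (C * dist x y) with hK
  have key : ∀ M : ENNReal, (L : ENNReal) < M → edist (f x) (f y) ≤ M * K := by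
    intro M hM
    have := core_lemma f (fun z => lt_of_le_of_lt (hf z) hM) γ hcont
    rw [h0, h1, edist_comm] at this
    exact this.trans (mul_le_mul_right hvar M)
  have hKeq : (↑(C * L) : ENNReal) * edist x y = (L : ENNReal) * K := by
    rw [hK, ENNReal.ofReal_mul C.coe_nonneg, ← edist_dist,
      ENNReal.ofReal_coe_nnreal, ENNReal.coe_mul]
    ring
  rw [hKeq]
  apply ENNReal.le_of_forall_pos_le_add
  intro ε hε _
  by_cases hK0 : K = 0
  · have := key ((L : ENNReal) + 1) (ENNReal.lt_add_right ENNReal.coe_ne_top one_ne_zero)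
    rw [hK0] at this ⊢
    simp only [mul_zero, zero_add] at this ⊢
    exact this.trans zero_le
  · have hKtop : K ≠ ⊤ := ENNReal.ofReal_ne_top
    have hdiv : (ε : ENNReal) / K ≠ 0 := by
      simp [ENNReal.div_eq_zero_iff, hKtop, hε.ne']
    have hM : (L : ENNReal) < L + ε / K :=
      ENNReal.lt_add_right ENNReal.coe_ne_top hdiv
    calc edist (f x) (f y) ≤ ((L : ENNReal) + ε / K) * K := key _ hM
      _ = (L : ENNReal) * K + (ε / K) * K := add_mul _ _ _
      _ = (L : ENNReal) * K + ε := by rw [ENNReal.div_mul_cancel hK0 hKtop]
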